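/- Let $\mu$ be a Borel probability measure on the set $\Omega(d)$ of rank-one projections on $\mathbb{C}^d$ and let $f : \Omega(d) \to \mathbb{R}$ be continuous. If $\int f(P)\, P^{\otimes n}\, d\mu(P) \ge 0$ (positive semidefinite) for all $n \in \mathbb{N}$, then $f \ge 0$ holds $\mu$-almost everywhere. -/

import Mathlib

open Matrix MeasureTheory ComplexOrder

/-- The set of rank-one projections `|φ⟩⟨φ|` (with `φ` a unit vector) on `ℂ^d`. -/
def OmegaSet (d : ℕ) : Set (Matrix (Fin d) (Fin d) ℂ) :=
  {P | ∃ φ : Fin d → ℂ, (∑ i, Complex.normSq (φ i)) = 1 ∧ P = vecMulVec φ (star φ)}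

/--  carries its Borel σ-algebra. -/
noncomputable instance (d : ℕ) : MeasurableSpace ↥(OmegaSet d) := borel _

instance (d : ℕ) : BorelSpace ↥(OmegaSet d) := ⟨rfl⟩

instance (d : ℕ) : SecondCountableTopology (Matrix (Fin d) (Fin d) ℂ) :=
  inferInstanceAs (SecondCountableTopology (Fin d → Fin d → ℂ))

theorem isCompact_omegaSet (d : ℕ) : IsCompact (OmegaSet d) := by
  have hS : IsCompact {φ : Fin d → ℂ | (∑ i, Complex.normSq (φ i)) = 1} := by
    apply Metric.isCompact_of_isClosed_isBounded
    · exact isClosed_eq (by continuity) continuous_const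
    · rw [Metric.isBounded_iff_subset_closedBall 0]
      refine ⟨1, fun φ hφ => ?_⟩
      simp only [Metric.mem_closedBall, dist_zero_right]
      rw [pi_norm_le_iff_of_nonneg zero_le_one]
      intro i
      have h1 : Complex.normSq (φ i) ≤ 1 := by
        rw [← hφ]
        exact Finset.single_le_sum (f := fun j => Complex.normSq (φ j))
          (fun j _ => Complex.normSq_nonneg _) (Finset.mem_univ i)
      have h2 : ‖φ i‖ ^ 2 = Complex.normSq (φ i) := by
        exact Complex.sq_norm _
      nlinarith [norm_nonneg (φ i)]
  have himg : OmegaSet d = (fun φ : Fin d → ℂ => vecMulVec φ (star φ)) ''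
      {φ : Fin d → ℂ | (∑ i, Complex.normSq (φ i)) = 1} := by
    ext P
    constructor
    · rintro ⟨φ, h1, rfl⟩; exact ⟨φ, h1, rfl⟩
    · rintro ⟨φ, h1, rfl⟩; exact ⟨φ, h1, rfl⟩
  rw [himg]
  apply hS.image
  apply continuous_pi; intro j; apply continuous_pi; intro k
  simp only [vecMulVec_apply, Pi.star_apply]
  exact ((continuous_apply j).mul ((continuous_apply k).star))

instance (d : ℕ) : CompactSpace ↥(OmegaSet d) :=
  isCompact_iff_compactSpace.mp (isCompact_omegaSet d)

theorem contIntegrable {d : ℕ} (μ : Measure ↥(OmegaSet d)) [IsFiniteMeasure μ]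
    {E : Type*} [NormedAddCommGroup E] {g : ↥(OmegaSet d) → E} (hg : Continuous g) :
    Integrable g μ :=
  hg.integrable_of_hasCompactSupport
    (IsCompact.of_isClosed_subset isCompact_univ (isClosed_tsupport g) (Set.subset_univ _))

theorem cont_entry {d : ℕ} (j k : Fin d) :
    Continuous fun P : ↥(OmegaSet d) => (P : Matrix (Fin d) (Fin d) ℂ) j k :=
  (continuous_apply k).comp ((continuous_apply j).comp continuous_subtype_val)

theorem cfun_eq {d : ℕ} (ψ φ : Fin d → ℂ) :
    (∑ j, ∑ k, (starRingEnd ℂ) (ψ j) * ψ k * (vecMulVec φ (star φ)) j k) =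
      ((Complex.normSq (∑ j, (starRingEnd ℂ) (ψ j) * φ j) : ℝ) : ℂ) := by
  have : ((starRingEnd ℂ) (∑ j, (starRingEnd ℂ) (ψ j) * φ j)) =
      ∑ k, ψ k * (starRingEnd ℂ) (φ k) := by
    rw [map_sum]; congr 1; ext k; rw [_root_.map_mul, Complex.conj_conj]
  rw [← Complex.mul_conj, this, Finset.sum_mul_sum]
  congr 1; ext j; congr 1; ext k
  simp [vecMulVec_apply]
  ring

/-- The overlap function `T_ψ(P) = Re ⟨ψ, P ψ⟩`. -/
noncomputable def Tfun {d : ℕ} (ψ : Fin d → ℂ) (P : ↥(OmegaSet d)) : ℝ :=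
  (∑ j, ∑ k, (starRingEnd ℂ) (ψ j) * ψ k * (P : Matrix (Fin d) (Fin d) ℂ) j k).re

theorem Tfun_eq {d : ℕ} (ψ : Fin d → ℂ) (P : ↥(OmegaSet d)) {φ : Fin d → ℂ}
    (hP : (P : Matrix (Fin d) (Fin d) ℂ) = vecMulVec φ (star φ)) :
    Tfun ψ P = Complex.normSq (∑ j, (starRingEnd ℂ) (ψ j) * φ j) := by
  unfold Tfun; rw [hP, cfun_eq]; simp

theorem Tfun_nonneg {d : ℕ} (ψ : Fin d → ℂ) (P : ↥(OmegaSet d)) : 0 ≤ Tfun ψ P := by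
  obtain ⟨φ, _, hP⟩ := P.2
  rw [Tfun_eq ψ P hP]; exact Complex.normSq_nonneg _

theorem Tfun_continuous {d : ℕ} (ψ : Fin d → ℂ) : Continuous (Tfun ψ) := by
  apply Complex.continuous_re.comp
  apply continuous_finset_sum; intro j _
  apply continuous_finset_sum; intro k _
  exact continuous_const.mul (cont_entry j k)

theorem keyA {d : ℕ} (μ : Measure ↥(OmegaSet d)) [IsProbabilityMeasure μ]
    (f : C(↥(OmegaSet d), ℝ))
    (hpsd : ∀ n : ℕ, Matrix.PosSemidef (Matrix.of fun F G : Fin n → Fin d =>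
        ∫ P, (f P : ℂ) * ∏ i, (P : Matrix (Fin d) (Fin d) ℂ) (F i) (G i) ∂μ))
    (ψ : Fin d → ℂ) (n : ℕ) :
    0 ≤ ∫ P, f P * (Tfun ψ P) ^ n ∂μ := by
  classical
  set v : (Fin n → Fin d) → ℂ := fun G => ∏ i, ψ (G i) with hv
  have h0 := (hpsd n).dotProduct_mulVec_nonneg v
  have hIR : (∫ P, ((f P * Tfun ψ P ^ n : ℝ) : ℂ) ∂μ) =
      ((∫ P, f P * Tfun ψ P ^ n ∂μ : ℝ) : ℂ) := integral_ofReal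
  rw [← Complex.zero_le_real, ← hIR]
  have pointwise : ∀ P : ↥(OmegaSet d),
      ((f P * Tfun ψ P ^ n : ℝ) : ℂ) =
        ∑ F : Fin n → Fin d, ∑ G : Fin n → Fin d,
          (starRingEnd ℂ) (v F) * v G *
            ((f P : ℂ) * ∏ i, (P : Matrix (Fin d) (Fin d) ℂ) (F i) (G i)) := by
    intro P
    obtain ⟨φ, _, hP⟩ := P.2
    set z : ℂ := ∑ j, (starRingEnd ℂ) (ψ j) * φ j with hz
    have hw : (starRingEnd ℂ) z = ∑ k, ψ k * (starRingEnd ℂ) (φ k) := by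
      rw [hz, map_sum]; congr 1; ext k; rw [_root_.map_mul, Complex.conj_conj]
    have hT : ((Tfun ψ P : ℝ) : ℂ) = z * (starRingEnd ℂ) z := by
      rw [Tfun_eq ψ P hP, Complex.mul_conj]
    have hvconj : ∀ F : Fin n → Fin d, (starRingEnd ℂ) (v F) = ∏ i, (starRingEnd ℂ) (ψ (F i)) := by
      intro F; rw [hv]; exact map_prod _ _ _
    have e1 : ∀ F G : Fin n → Fin d,
        (starRingEnd ℂ) (v F) * v G *
            ((f P : ℂ) * ∏ i, (P : Matrix (Fin d) (Fin d) ℂ) (F i) (G i)) =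
          (f P : ℂ) * ((∏ i, ((starRingEnd ℂ) (ψ (F i)) * φ (F i))) *
            (∏ i, (ψ (G i) * (starRingEnd ℂ) (φ (G i))))) := by
      intro F G
      rw [hvconj, hv]
      simp only [hP, vecMulVec_apply, Pi.star_apply, RCLike.star_def]
      rw [Finset.prod_mul_distrib, Finset.prod_mul_distrib, Finset.prod_mul_distrib]
      ring
    calc ((f P * Tfun ψ P ^ n : ℝ) : ℂ)
        = (f P : ℂ) * ((Tfun ψ P : ℝ) : ℂ) ^ n := by push_cast; ring
      _ = (f P : ℂ) * (z ^ n * ((starRingEnd ℂ) z) ^ n) := by rw [hT, mul_pow]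
      _ = (f P : ℂ) * ((∑ F : Fin n → Fin d, ∏ i, ((starRingEnd ℂ) (ψ (F i)) * φ (F i))) *
            (∑ G : Fin n → Fin d, ∏ i, (ψ (G i) * (starRingEnd ℂ) (φ (G i))))) := by
          rw [hz, hw, Fintype.sum_pow, Fintype.sum_pow]
      _ = ∑ F : Fin n → Fin d, ∑ G : Fin n → Fin d,
            (starRingEnd ℂ) (v F) * v G *
              ((f P : ℂ) * ∏ i, (P : Matrix (Fin d) (Fin d) ℂ) (F i) (G i)) := by
          rw [Finset.sum_mul_sum, Finset.mul_sum]
          congr 1; ext F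
          rw [Finset.mul_sum]
          congr 1; ext G
          rw [e1]
  have hint : ∀ F G : Fin n → Fin d,
      Integrable (fun P : ↥(OmegaSet d) =>
        (starRingEnd ℂ) (v F) * v G *
          ((f P : ℂ) * ∏ i, (P : Matrix (Fin d) (Fin d) ℂ) (F i) (G i))) μ := by
    intro F G
    apply contIntegrable
    apply continuous_const.mul
    exact (Complex.continuous_ofReal.comp f.continuous).mul
      (continuous_finset_prod _ fun i _ => cont_entry (F i) (G i))
  calc (0 : ℂ) ≤ star v ⬝ᵥ (Matrix.of fun F G : Fin n → Fin d =>
        ∫ P, (f P : ℂ) * ∏ i, (P : Matrix (Fin d) (Fin d) ℂ) (F i) (G i) ∂μ) *ᵥ v := h0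
    _ = ∑ F : Fin n → Fin d, ∑ G : Fin n → Fin d,
          ∫ P, (starRingEnd ℂ) (v F) * v G *
            ((f P : ℂ) * ∏ i, (P : Matrix (Fin d) (Fin d) ℂ) (F i) (G i)) ∂μ := by
        simp only [dotProduct, Matrix.mulVec, Matrix.of_apply, Pi.star_apply,
          RCLike.star_def, Finset.mul_sum]
        refine Finset.sum_congr rfl fun F _ => Finset.sum_congr rfl fun G _ => ?_
        rw [integral_const_mul]
        ring
    _ = ∫ P, ∑ F : Fin n → Fin d, ∑ G : Fin n → Fin d,
          (starRingEnd ℂ) (v F) * v G *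
            ((f P : ℂ) * ∏ i, (P : Matrix (Fin d) (Fin d) ℂ) (F i) (G i)) ∂μ := by
        rw [integral_finset_sum _ (fun F _ => integrable_finset_sum _ (fun G _ => hint F G))]
        refine Finset.sum_congr rfl fun F _ => ?_
        rw [integral_finset_sum _ (fun G _ => hint F G)]
    _ = ∫ P, ((f P * Tfun ψ P ^ n : ℝ) : ℂ) ∂μ := by
        congr 1; ext P; rw [pointwise P]

theorem Dsum_aux {d : ℕ} (ψ φ : Fin d → ℂ) (hψ : (∑ i, Complex.normSq (ψ i)) = 1)
    (hφ : (∑ i, Complex.normSq (φ i)) = 1) :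
    ∑ j, ∑ k, Complex.normSq
        ((vecMulVec φ (star φ)) j k - (vecMulVec ψ (star ψ)) j k) =
      2 - 2 * Complex.normSq (∑ j, (starRingEnd ℂ) (ψ j) * φ j) := by
  set z : ℂ := ∑ j, (starRingEnd ℂ) (ψ j) * φ j with hz
  apply Complex.ofReal_inj.mp
  push_cast [← Complex.mul_conj]
  simp only [vecMulVec_apply, Pi.star_apply, RCLike.star_def]
  have expand : ∀ j k : Fin d,
      (φ j * (starRingEnd ℂ) (φ k) - ψ j * (starRingEnd ℂ) (ψ k)) *
          (starRingEnd ℂ) (φ j * (starRingEnd ℂ) (φ k) - ψ j * (starRingEnd ℂ) (ψ k)) =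
        (φ j * (starRingEnd ℂ) (φ j)) * ((starRingEnd ℂ) (φ k) * φ k) +
          (ψ j * (starRingEnd ℂ) (ψ j)) * ((starRingEnd ℂ) (ψ k) * ψ k) -
          (φ j * (starRingEnd ℂ) (ψ j)) * ((starRingEnd ℂ) (φ k) * ψ k) -
          (ψ j * (starRingEnd ℂ) (φ j)) * ((starRingEnd ℂ) (ψ k) * φ k) := by
    intro j k
    simp only [map_sub, _root_.map_mul, Complex.conj_conj]
    ring
  simp only [expand, Finset.sum_add_distrib, Finset.sum_sub_distrib, ← Finset.sum_mul_sum]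
  have hφ1 : (∑ j, φ j * (starRingEnd ℂ) (φ j)) = 1 := by
    simp only [Complex.mul_conj]
    rw [← Complex.ofReal_sum, hφ, Complex.ofReal_one]
  have hφ2 : (∑ k, (starRingEnd ℂ) (φ k) * φ k) = 1 := by
    simp only [mul_comm]; exact hφ1
  have hψ1 : (∑ j, ψ j * (starRingEnd ℂ) (ψ j)) = 1 := by
    simp only [Complex.mul_conj]
    rw [← Complex.ofReal_sum, hψ, Complex.ofReal_one]
  have hψ2 : (∑ k, (starRingEnd ℂ) (ψ k) * ψ k) = 1 := by
    simp only [mul_comm]; exact hψ1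
  have hz1 : (∑ j, φ j * (starRingEnd ℂ) (ψ j)) = z := by
    rw [hz]; congr 1; ext j; ring
  have hz2 : (∑ k, (starRingEnd ℂ) (φ k) * ψ k) = (starRingEnd ℂ) z := by
    rw [hz, map_sum]; congr 1; ext k; rw [_root_.map_mul, Complex.conj_conj]; ring
  have hz3 : (∑ j, ψ j * (starRingEnd ℂ) (φ j)) = (starRingEnd ℂ) z := by
    rw [hz, map_sum]; congr 1; ext j; rw [_root_.map_mul, Complex.conj_conj]
  have hz4 : (∑ k, (starRingEnd ℂ) (ψ k) * φ k) = z := hz.symm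
  rw [hφ1, hφ2, hψ1, hψ2, hz1, hz2, hz3, hz4]
  ring

theorem Tfun_le_one {d : ℕ} {ψ : Fin d → ℂ} (hψ : (∑ i, Complex.normSq (ψ i)) = 1)
    (P : ↥(OmegaSet d)) : Tfun ψ P ≤ 1 := by
  obtain ⟨φ, hφ, hP⟩ := P.2
  have h := Dsum_aux ψ φ hψ hφ
  have hnn : 0 ≤ ∑ j, ∑ k, Complex.normSq
      ((vecMulVec φ (star φ)) j k - (vecMulVec ψ (star ψ)) j k) :=
    Finset.sum_nonneg fun j _ => Finset.sum_nonneg fun k _ => Complex.normSq_nonneg _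
  rw [Tfun_eq ψ P hP]
  linarith

theorem Tfun_eq_one {d : ℕ} {ψ : Fin d → ℂ} (hψ : (∑ i, Complex.normSq (ψ i)) = 1)
    {Q : ↥(OmegaSet d)} (hQ : (Q : Matrix (Fin d) (Fin d) ℂ) = vecMulVec ψ (star ψ))
    (P : ↥(OmegaSet d)) (h1 : Tfun ψ P = 1) : P = Q := by
  obtain ⟨φ, hφ, hP⟩ := P.2
  have h := Dsum_aux ψ φ hψ hφ
  rw [Tfun_eq ψ P hP] at h1
  rw [h1] at h
  norm_num at h
  apply Subtype.ext
  rw [hP, hQ]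
  ext j k
  have hjk : ∀ j' ∈ Finset.univ (α := Fin d), ∀ k' ∈ Finset.univ (α := Fin d),
      Complex.normSq ((vecMulVec φ (star φ)) j' k' - (vecMulVec ψ (star ψ)) j' k') = 0 := by
    have h' := (Finset.sum_eq_zero_iff_of_nonneg
      (fun j' _ => Finset.sum_nonneg fun k' _ => Complex.normSq_nonneg _)).mp h
    intro j' hj' k' hk'
    exact (Finset.sum_eq_zero_iff_of_nonneg
      (fun k' _ => Complex.normSq_nonneg _)).mp (h' j' hj') k' hk'
  have := hjk j (Finset.mem_univ j) k (Finset.mem_univ k)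
  rw [Complex.normSq_eq_zero, sub_eq_zero] at this
  exact this

theorem Tfun_self {d : ℕ} {ψ : Fin d → ℂ} (hψ : (∑ i, Complex.normSq (ψ i)) = 1)
    {Q : ↥(OmegaSet d)} (hQ : (Q : Matrix (Fin d) (Fin d) ℂ) = vecMulVec ψ (star ψ)) :
    Tfun ψ Q = 1 := by
  rw [Tfun_eq ψ Q hQ]
  have : (∑ j, (starRingEnd ℂ) (ψ j) * ψ j) = ((1 : ℝ) : ℂ) := by
    have : ∀ j, (starRingEnd ℂ) (ψ j) * ψ j = ((Complex.normSq (ψ j) : ℝ) : ℂ) := by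
      intro j; rw [mul_comm, Complex.mul_conj]
    simp only [this]
    rw [← Complex.ofReal_sum, hψ]
  rw [this]
  simp [Complex.normSq_ofReal]

theorem no_null_nbhd_nonneg {d : ℕ} (μ : Measure ↥(OmegaSet d)) [IsProbabilityMeasure μ]
    (f : C(↥(OmegaSet d), ℝ))
    (hpsd : ∀ n : ℕ, Matrix.PosSemidef (Matrix.of fun F G : Fin n → Fin d =>
        ∫ P, (f P : ℂ) * ∏ i, (P : Matrix (Fin d) (Fin d) ℂ) (F i) (G i) ∂μ))
    (P₀ : ↥(OmegaSet d))
    (hP₀ : ∀ U : Set ↥(OmegaSet d), IsOpen U → P₀ ∈ U → μ U ≠ 0) :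
    0 ≤ f P₀ := by
  by_contra hneg
  push_neg at hneg
  obtain ⟨ψ, hψ, hQmat⟩ := P₀.2
  set δ : ℝ := -f P₀ / 2 with hδdef
  have hδ : 0 < δ := by simp only [hδdef]; linarith
  set V : Set ↥(OmegaSet d) := {P | f P < -δ} with hV
  have hVopen : IsOpen V := isOpen_lt f.continuous continuous_const
  have hP₀V : P₀ ∈ V := by simp only [hV, Set.mem_setOf_eq, hδdef]; linarith
  have hTcont := Tfun_continuous ψ
  have hT₀ : Tfun ψ P₀ = 1 := Tfun_self hψ hQmat
  have claim : ∃ m : ℕ, {P | 1 - 1/((m:ℝ)+1) ≤ Tfun ψ P} ∩ Vᶜ = ∅ := by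
    by_contra hcl
    push_neg at hcl
    set C : ℕ → Set ↥(OmegaSet d) := fun m => {P | 1 - 1/((m:ℝ)+1) ≤ Tfun ψ P} ∩ Vᶜ with hC
    have hCclosed : ∀ m, IsClosed (C m) :=
      fun m => (isClosed_le continuous_const hTcont).inter hVopen.isClosed_compl
    have hCdec : ∀ m, C (m+1) ⊆ C m := by
      intro m P hPm
      simp only [hC, Set.mem_inter_iff, Set.mem_setOf_eq] at hPm ⊢
      refine ⟨?_, hPm.2⟩
      have h2' := hPm.1
      have h1 : (0:ℝ) < (m:ℝ)+1 := by positivity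
      have h3 : 1/((m:ℝ)+1+1) ≤ 1/((m:ℝ)+1) := by
        apply one_div_le_one_div_of_le h1; linarith
      push_cast at h2' ⊢
      linarith
    have hCne : ∀ m, (C m).Nonempty := fun m => hcl m
    obtain ⟨Pstar, hPstar⟩ :=
      IsCompact.nonempty_iInter_of_sequence_nonempty_isCompact_isClosed C hCdec hCne
        ((hCclosed 0).isCompact) hCclosed
    simp only [Set.mem_iInter] at hPstar
    have h1 : Tfun ψ Pstar = 1 := by
      have hub := Tfun_le_one hψ Pstar
      have hlb : ∀ m : ℕ, 1 - 1/((m:ℝ)+1) ≤ Tfun ψ Pstar := fun m => (hPstar m).1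
      have hge : 1 ≤ Tfun ψ Pstar := by
        by_contra hlt
        push_neg at hlt
        obtain ⟨m, hm⟩ := exists_nat_one_div_lt (by linarith : (0:ℝ) < 1 - Tfun ψ Pstar)
        have := hlb m
        linarith
      linarith
    have heq := Tfun_eq_one hψ hQmat Pstar h1
    exact (hPstar 0).2 (heq ▸ hP₀V)
  obtain ⟨m, hm⟩ := claim
  set η : ℝ := 1/((m:ℝ)+1) with hη
  have hη0 : 0 < η := by positivity
  have hη1 : η ≤ 1 := by
    rw [hη]
    rw [div_le_one (by positivity)]
    simp
  set U : Set ↥(OmegaSet d) := {P | 1 - η < Tfun ψ P} with hU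
  have hUopen : IsOpen U := isOpen_lt continuous_const hTcont
  have hUV : U ⊆ V := by
    intro P hPU
    by_contra hPV
    have h1 : P ∈ {P : ↥(OmegaSet d) | 1 - η ≤ Tfun ψ P} := by show 1 - η ≤ Tfun ψ P; exact le_of_lt hPU
    have hmem := Set.mem_inter h1 (Set.mem_compl hPV)
    rw [hm] at hmem
    exact hmem
  set U' : Set ↥(OmegaSet d) := {P | 1 - η/2 < Tfun ψ P} with hU'
  have hU'open : IsOpen U' := isOpen_lt continuous_const hTcont
  have hU'U : U' ⊆ U := fun P hP => by
    simp only [hU, Set.mem_setOf_eq]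
    simp only [hU', Set.mem_setOf_eq] at hP
    linarith
  have hP₀U' : P₀ ∈ U' := by
    simp only [hU', Set.mem_setOf_eq, hT₀]
    linarith
  have hμU' : μ U' ≠ 0 := hP₀ U' hU'open hP₀U'
  set m0 : ℝ := (μ U').toReal with hm0def
  have hm0 : 0 < m0 := ENNReal.toReal_pos hμU' (measure_ne_top μ U')
  set C0 : ℝ := ‖f‖ with hC0def
  have hC0 : ∀ P, |f P| ≤ C0 := by
    intro P
    rw [← Real.norm_eq_abs]
    exact f.norm_coe_le_norm P
  have hC0nn : 0 ≤ C0 := le_trans (abs_nonneg _) (hC0 P₀)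
  have hbase : (0:ℝ) < 1 - η/2 := by linarith
  have hrlt : (1-η)/(1-η/2) < 1 := by rw [div_lt_one hbase]; linarith
  have hrnn : 0 ≤ (1-η)/(1-η/2) := div_nonneg (by linarith) hbase.le
  have main : ∀ n : ℕ, δ * m0 * (1-η/2)^n ≤ C0 * (1-η)^n := by
    intro n
    have hkey := keyA μ f hpsd ψ n
    set g : ↥(OmegaSet d) → ℝ := fun P => f P * Tfun ψ P ^ n with hg
    have hgcont : Continuous g := f.continuous.mul (hTcont.pow n)
    have hgint : Integrable g μ := contIntegrable μ hgcont
    have hTint : Integrable (fun P => Tfun ψ P ^ n) μ := contIntegrable μ (hTcont.pow n)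
    have hsplit : ∫ P, g P ∂μ = (∫ P in U, g P ∂μ) + ∫ P in Uᶜ, g P ∂μ :=
      (integral_add_compl hUopen.measurableSet hgint).symm
    have hb1 : (∫ P in U, g P ∂μ) ≤ -δ * ∫ P in U, Tfun ψ P ^ n ∂μ := by
      rw [← integral_const_mul]
      apply setIntegral_mono_on hgint.integrableOn
        ((contIntegrable μ (continuous_const.mul (hTcont.pow n))).integrableOn)
        hUopen.measurableSet
      intro P hPU
      exact mul_le_mul_of_nonneg_right (le_of_lt (hUV hPU)) (pow_nonneg (Tfun_nonneg ψ P) n)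
    have hb2 : ∫ P in U', Tfun ψ P ^ n ∂μ ≤ ∫ P in U, Tfun ψ P ^ n ∂μ := by
      apply setIntegral_mono_set hTint.integrableOn
        (Filter.Eventually.of_forall fun P => pow_nonneg (Tfun_nonneg ψ P) n)
        (Filter.Eventually.of_forall hU'U)
    have hb3 : (1-η/2)^n * m0 ≤ ∫ P in U', Tfun ψ P ^ n ∂μ := by
      have hc : (∫ _P in U', ((1-η/2)^n : ℝ) ∂μ) = m0 * (1-η/2)^n := by
        rw [setIntegral_const, smul_eq_mul]; rfl
      have hmono : (∫ _P in U', ((1-η/2)^n : ℝ) ∂μ) ≤ ∫ P in U', Tfun ψ P ^ n ∂μ := by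
        apply setIntegral_mono_on (integrableOn_const (measure_ne_top μ U'))
          hTint.integrableOn hU'open.measurableSet
        intro P hP
        exact pow_le_pow_left₀ hbase.le (le_of_lt hP) n
      rw [hc] at hmono
      linarith
    have hb4 : ∫ P in Uᶜ, g P ∂μ ≤ C0 * (1-η)^n := by
      have hptw : ∀ P ∈ Uᶜ, g P ≤ C0 * (1-η)^n := by
        intro P hP
        simp only [hU, Set.mem_compl_iff, Set.mem_setOf_eq, not_lt] at hP
        have h1 : Tfun ψ P ^ n ≤ (1-η)^n := pow_le_pow_left₀ (Tfun_nonneg ψ P) hP n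
        have h2 : g P ≤ |f P| * Tfun ψ P ^ n :=
          mul_le_mul_of_nonneg_right (le_abs_self _) (pow_nonneg (Tfun_nonneg ψ P) n)
        calc g P ≤ |f P| * Tfun ψ P ^ n := h2
          _ ≤ C0 * (1-η)^n :=
            mul_le_mul (hC0 P) h1 (pow_nonneg (Tfun_nonneg ψ P) n) hC0nn
      calc ∫ P in Uᶜ, g P ∂μ ≤ ∫ _P in Uᶜ, C0 * (1-η)^n ∂μ :=
          setIntegral_mono_on hgint.integrableOn
            (integrableOn_const (measure_ne_top μ Uᶜ))
            hUopen.measurableSet.compl hptw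
        _ = (μ Uᶜ).toReal * (C0 * (1-η)^n) := by rw [setIntegral_const, smul_eq_mul]; rfl
        _ ≤ 1 * (C0 * (1-η)^n) := by
            have hμ1 : (μ Uᶜ).toReal ≤ 1 := by
              have h := ENNReal.toReal_mono ENNReal.one_ne_top
                (prob_le_one (μ := μ) (s := Uᶜ))
              simpa using h
            exact mul_le_mul_of_nonneg_right hμ1
              (mul_nonneg hC0nn (pow_nonneg (by linarith) n))
        _ = C0 * (1-η)^n := one_mul _
    have hTU : (1-η/2)^n * m0 ≤ ∫ P in U, Tfun ψ P ^ n ∂μ := le_trans hb3 hb2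
    have hneg' : -δ * (∫ P in U, Tfun ψ P ^ n ∂μ) ≤ -δ * ((1-η/2)^n * m0) := by
      apply mul_le_mul_of_nonpos_left hTU (by linarith)
    have hkey' : 0 ≤ (∫ P in U, g P ∂μ) + ∫ P in Uᶜ, g P ∂μ := by
      rw [← hsplit]; exact hkey
    have hring : -δ * ((1-η/2)^n * m0) = -(δ * m0 * (1-η/2)^n) := by ring
    linarith [hkey', hb1, hb4, hneg', hring]
  have htend : Filter.Tendsto (fun n => C0 * ((1-η)/(1-η/2))^n) Filter.atTop (nhds 0) := by
    simpa using (tendsto_pow_atTop_nhds_zero_of_lt_one hrnn hrlt).const_mul C0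
  have hle : δ * m0 ≤ 0 := by
    apply ge_of_tendsto htend
    apply Filter.Eventually.of_forall
    intro n
    have hpow : 0 < (1-η/2)^n := pow_pos hbase n
    show δ * m0 ≤ C0 * ((1-η)/(1-η/2))^n
    rw [div_pow, ← mul_div_assoc, le_div_iff₀ hpow]
    exact main n
  exact absurd hle (not_le.mpr (mul_pos hδ hm0))

/-- If `μ` is a Borel probability measure on `Ω(d)` and `f : Ω(d) → ℝ` is continuous
such that `∫ f(P) P^{⊗n} dμ(P) ≥ 0` (positive semidefinite) for every `n`, then
`f ≥ 0` holds `μ`-almost everywhere. -/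
theorem stmt_14 (d : ℕ) (μ : Measure ↥(OmegaSet d)) [IsProbabilityMeasure μ]
    (f : C(↥(OmegaSet d), ℝ))
    (hpsd : ∀ n : ℕ, Matrix.PosSemidef (Matrix.of fun F G : Fin n → Fin d =>
        ∫ P, (f P : ℂ) * ∏ i, (P : Matrix (Fin d) (Fin d) ℂ) (F i) (G i) ∂μ)) :
    ∀ᵐ P ∂μ, 0 ≤ f P := by
  rw [ae_iff]
  set S := {P : ↥(OmegaSet d) | ∃ U : Set ↥(OmegaSet d), IsOpen U ∧ P ∈ U ∧ μ U = 0} with hS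
  have hsub : {P | ¬ 0 ≤ f P} ⊆ S := by
    intro P hP
    by_contra hPS
    simp only [hS, Set.mem_setOf_eq, not_exists] at hPS
    push_neg at hPS
    exact hP (no_null_nbhd_nonneg μ f hpsd P (fun U hUo hPU => (hPS U hUo hPU)))
  apply measure_mono_null hsub
  have hch : ∀ P : S, ∃ U : Set ↥(OmegaSet d), IsOpen U ∧ (P:↥(OmegaSet d)) ∈ U ∧ μ U = 0 :=
    fun P => P.2
  choose Uf hUopen hUmem hUnull using hch
  obtain ⟨T, hTc, hTU⟩ := TopologicalSpace.isOpen_iUnion_countable Uf hUopen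
  have hScover : S ⊆ ⋃ i ∈ T, Uf i := by
    intro P hP
    rw [hTU]
    exact Set.mem_iUnion.mpr ⟨⟨P, hP⟩, hUmem ⟨P, hP⟩⟩
  apply measure_mono_null hScover
  exact (measure_biUnion_null_iff hTc).mpr fun i _ => hUnull i
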